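/- The function p(θ,t) = λ·(1/(1 - e^{2λt}) - sin²(θ + γ)), defined for t < 0, λ > 0, and any fixed angle γ, satisfies the pressure equation p_t = p·p_θθ - (1/2)·p_θ² + 2p². -/

import Mathlib

open Real

lemma space_deriv (lam γ C : ℝ) :
    deriv (fun x : ℝ => lam * (C - Real.sin (x + γ) ^ 2))
      = fun x : ℝ => -(lam * (2 * Real.sin (x + γ) * Real.cos (x + γ))) := by
  funext x
  have h : HasDerivAt (fun x : ℝ => lam * (C - Real.sin (x + γ) ^ 2))
      (-(lam * (2 * Real.sin (x + γ) * Real.cos (x + γ)))) x := by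
    have h1 : HasDerivAt (fun x : ℝ => x + γ) 1 x := (hasDerivAt_id x).add_const γ
    have h2 : HasDerivAt (fun x : ℝ => Real.sin (x + γ)) (Real.cos (x + γ) * 1) x :=
      (Real.hasDerivAt_sin _).comp x h1
    have h3 : HasDerivAt (fun x : ℝ => Real.sin (x + γ) ^ 2)
        (2 * Real.sin (x + γ) ^ 1 * (Real.cos (x + γ) * 1)) x := h2.pow 2
    have h4 := ((hasDerivAt_const x C).sub h3).const_mul lam
    exact h4.congr_deriv (by ring)
  exact h.deriv

/-- The Angenent oval pressure `p(θ,t) = λ(1/(1-e^{2λt}) - sin²(θ+γ))` satisfies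
`p_t = p p_θθ - (1/2) p_θ² + 2p²` for `t < 0`. -/
theorem angenent_oval_solves_pressure (lam γ : ℝ) (hlam : 0 < lam) :
    ∀ θ t : ℝ, t < 0 →
      deriv (fun s : ℝ => lam * (1 / (1 - Real.exp (2 * lam * s)) - Real.sin (θ + γ) ^ 2)) t
        = (lam * (1 / (1 - Real.exp (2 * lam * t)) - Real.sin (θ + γ) ^ 2)) *
            deriv (deriv (fun x : ℝ =>
              lam * (1 / (1 - Real.exp (2 * lam * t)) - Real.sin (x + γ) ^ 2))) θ
          - (1 / 2) * (deriv (fun x : ℝ =>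
              lam * (1 / (1 - Real.exp (2 * lam * t)) - Real.sin (x + γ) ^ 2)) θ) ^ 2
          + 2 * (lam * (1 / (1 - Real.exp (2 * lam * t)) - Real.sin (θ + γ) ^ 2)) ^ 2 := by
  intro θ t ht
  have hexp : Real.exp (2 * lam * t) < 1 := by
    rw [← Real.exp_zero]
    exact Real.exp_lt_exp.2 (by nlinarith)
  have hne : 1 - Real.exp (2 * lam * t) ≠ 0 := by linarith
  set C : ℝ := 1 / (1 - Real.exp (2 * lam * t)) with hC
  -- time derivative
  have htd : deriv (fun s : ℝ => lam * (1 / (1 - Real.exp (2 * lam * s)) - Real.sin (θ + γ) ^ 2)) t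
      = lam * (2 * lam * Real.exp (2 * lam * t) / (1 - Real.exp (2 * lam * t)) ^ 2) := by
    have h1 : HasDerivAt (fun s : ℝ => 2 * lam * s) (2 * lam) t := by
      simpa using (hasDerivAt_id t).const_mul (2 * lam)
    have h2 : HasDerivAt (fun s : ℝ => Real.exp (2 * lam * s))
        (Real.exp (2 * lam * t) * (2 * lam)) t := (Real.hasDerivAt_exp _).comp t h1
    have h3 : HasDerivAt (fun s : ℝ => 1 - Real.exp (2 * lam * s))
        (-(Real.exp (2 * lam * t) * (2 * lam))) t := by
      exact h2.const_sub 1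
    have h4 : HasDerivAt (fun s : ℝ => (1 - Real.exp (2 * lam * s))⁻¹)
        (-(-(Real.exp (2 * lam * t) * (2 * lam))) / (1 - Real.exp (2 * lam * t)) ^ 2) t :=
      h3.inv hne
    have h5 := ((h4.sub_const (Real.sin (θ + γ) ^ 2)).const_mul lam)
    have h6 : HasDerivAt
        (fun s : ℝ => lam * (1 / (1 - Real.exp (2 * lam * s)) - Real.sin (θ + γ) ^ 2))
        (lam * (2 * lam * Real.exp (2 * lam * t) / (1 - Real.exp (2 * lam * t)) ^ 2)) t := by
      have h7 : (fun s : ℝ => lam * (1 / (1 - Real.exp (2 * lam * s)) - Real.sin (θ + γ) ^ 2))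
          = fun s : ℝ => lam * ((1 - Real.exp (2 * lam * s))⁻¹ - Real.sin (θ + γ) ^ 2) := by
        funext s; rw [one_div]
      rw [h7]
      exact h5.congr_deriv (by ring)
    exact h6.deriv
  -- first space derivative
  have hsd1 := space_deriv lam γ C
  have hsd : deriv (fun x : ℝ => lam * (C - Real.sin (x + γ) ^ 2)) θ
      = -(lam * (2 * Real.sin (θ + γ) * Real.cos (θ + γ))) := by rw [hsd1]
  -- second space derivative
  have hsd2 : deriv (deriv (fun x : ℝ => lam * (C - Real.sin (x + γ) ^ 2))) θ
      = -(lam * (2 * (Real.cos (θ + γ) ^ 2 - Real.sin (θ + γ) ^ 2))) := by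
    rw [hsd1]
    have h1 : HasDerivAt (fun x : ℝ => x + γ) 1 θ := (hasDerivAt_id θ).add_const γ
    have h2 : HasDerivAt (fun x : ℝ => Real.sin (x + γ)) (Real.cos (θ + γ) * 1) θ :=
      (Real.hasDerivAt_sin _).comp θ h1
    have h3 : HasDerivAt (fun x : ℝ => Real.cos (x + γ)) (-Real.sin (θ + γ) * 1) θ :=
      (Real.hasDerivAt_cos _).comp θ h1
    have h4 : HasDerivAt (fun x : ℝ => -(lam * (2 * Real.sin (x + γ) * Real.cos (x + γ))))
        (-(lam * (2 * (Real.cos (θ + γ) ^ 2 - Real.sin (θ + γ) ^ 2)))) θ := by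
      have := ((h2.const_mul 2).mul h3).const_mul lam |>.neg
      exact this.congr_deriv (by ring)
    exact h4.deriv
  rw [htd]
  rw [hsd, hsd2]
  have hpyth : Real.sin (θ + γ) ^ 2 + Real.cos (θ + γ) ^ 2 = 1 := Real.sin_sq_add_cos_sq _
  have hCdef : C * (1 - Real.exp (2 * lam * t)) = 1 := by
    rw [hC]; field_simp
  have hLHS : lam * (2 * lam * Real.exp (2 * lam * t) / (1 - Real.exp (2 * lam * t)) ^ 2)
      = lam * (2 * lam * Real.exp (2 * lam * t) * C ^ 2) := by
    rw [hC]; field_simp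
  rw [hLHS]
  linear_combination (-(2 * lam ^ 2 * C)) * hCdef + (2 * lam ^ 2 * C) * hpyth
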